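/- arXiv:2205.10037 — 3 statements merged into one kernel-verified Lean document; each statement's English description precedes it below -/
import Mathlib

section
/- For the braking function B(v) = v²/(2b) with b > 0, if a vehicle with speed v ≥ 0 and free space f satisfies B(v) ≤ f and f − vΔt < B(v) and v − bΔt ≥ 0, then applying constant deceleration −b for time Δt gives new speed v' = v − bΔt ≥ 0 and displacement δ' = vΔt − bΔt²/2 ≥ 0, and these satisfy δ' + B(v') ≤ f. -/
/-- Braking function B(v) = v²/(2b). -/
noncomputable def brake (b v : ℝ) : ℝ := v ^ 2 / (2 * b)

theorem decel_region_safe (b Δt v f : ℝ) (hb : 0 < b) (hΔt : 0 < Δt)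
    (hv : 0 ≤ v) (hf : brake b v ≤ f)
    (h1 : f - v * Δt < brake b v) (h2 : 0 ≤ v - b * Δt) :
    0 ≤ v - b * Δt ∧ 0 ≤ v * Δt - b * Δt ^ 2 / 2 ∧
      (v * Δt - b * Δt ^ 2 / 2) + brake b (v - b * Δt) ≤ f := by
  refine ⟨h2, ?_, ?_⟩
  · nlinarith
  · have key : (v * Δt - b * Δt ^ 2 / 2) + brake b (v - b * Δt) = brake b v := by
      unfold brake
      field_simp
      ring
    rw [key]; exact hf
end

section
/- The region-based speed policy respects the safety contract: for any v ≥ 0 and f ≥ B(v) (with B(v) = v²/(2b), b > 0, a > 0, Δt > 0), the new speed v' and displacement δ' chosen by the policy satisfy v' ≥ 0, δ' ≥ 0, and δ' + B(v') ≤ f. The policy is: if f − vΔt < B(v) and v − bΔt < 0 then (v', δ') = (0, f); if f − vΔt < B(v) and v − bΔt ≥ 0 then (v', δ') = (v − bΔt, vΔt − bΔt²/2); if f − vΔt ≥ B(v) and f − vΔt − aΔt²/2 < B(v + aΔt) then (v', δ') = (v, vΔt); otherwise (v', δ') = (v + aΔt, vΔt + aΔt²/2). -/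
/-- The region-based speed policy: returns (new speed, displacement). -/
noncomputable def speedPolicy (b a Δt v f : ℝ) : ℝ × ℝ :=
  if f - v * Δt < brake b v ∧ v - b * Δt < 0 then (0, f)
  else if f - v * Δt < brake b v ∧ 0 ≤ v - b * Δt then
    (v - b * Δt, v * Δt - b * Δt ^ 2 / 2)
  else if brake b v ≤ f - v * Δt ∧ f - v * Δt - a * Δt ^ 2 / 2 < brake b (v + a * Δt) then
    (v, v * Δt)
  else (v + a * Δt, v * Δt + a * Δt ^ 2 / 2)

theorem speedPolicy_safe (b a Δt v f : ℝ) (hb : 0 < b) (ha : 0 < a) (hΔt : 0 < Δt)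
    (hv : 0 ≤ v) (hf : brake b v ≤ f) :
    0 ≤ (speedPolicy b a Δt v f).1 ∧ 0 ≤ (speedPolicy b a Δt v f).2 ∧
      (speedPolicy b a Δt v f).2 + brake b (speedPolicy b a Δt v f).1 ≤ f := by
  have hbv : 0 ≤ brake b v := by
    unfold brake; positivity
  unfold speedPolicy brake at *
  split_ifs with h1 h2 h3 <;> simp only [] <;> (try push_neg at *)
  · refine ⟨le_refl 0, by linarith, ?_⟩
    have : (0:ℝ)^2 / (2*b) = 0 := by ring
    linarith [this]
  · obtain ⟨hlt, hge⟩ := h2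
    refine ⟨hge, ?_, ?_⟩
    · nlinarith
    · have : v * Δt - b * Δt ^ 2 / 2 + (v - b * Δt) ^ 2 / (2 * b) = v ^ 2 / (2 * b) := by
        field_simp; ring
      linarith
  · refine ⟨hv, by positivity, by linarith [h3.1]⟩
  · have h4 : v ^ 2 / (2 * b) ≤ f - v * Δt := by
      by_contra h
      push_neg at h
      linarith [h1 h, h2 h]
    have h5 := h3 h4
    refine ⟨by positivity, by positivity, by linarith⟩
end

section
/- The conjunction of the vehicle and Runtime assume-guarantee contracts forms an inductive invariant: consider system states consisting, for each vehicle c in a finite set C, of a speed v_c, a free space f_c, and a traveled distance δ_c. Suppose each vehicle's transition satisfies: if 0 ≤ v_c and B_c(v_c) ≤ f_c then the new values satisfy 0 ≤ v_c', 0 ≤ δ_c', and δ_c' + B_c(v_c') ≤ f_c; and the Runtime's transition satisfies: if 0 ≤ δ_c ≤ f_c for all c and the ahead-spaces Ahead_c(f_c − δ_c) are pairwise non-crossing, then new free spaces satisfy f_c' ≥ f_c − δ_c and the spaces Ahead_c(f_c') are pairwise non-crossing. Then the property P ≡ (for all c: 0 ≤ v_c and B_c(v_c) ≤ f_c) and (the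 spaces Ahead_c(f_c) are pairwise non-crossing) is preserved by one full cycle (vehicle step followed by Runtime step). -/
/-- The conjunction of the vehicle and Runtime assume-guarantee contracts is an
inductive invariant preserved by one full cycle (vehicle step then Runtime step). -/
theorem contracts_inductive_invariant
    {ι P : Type*} [Fintype ι]
    (B : ι → ℝ → ℝ) (hBmono : ∀ c, Monotone (B c))
    (hBnonneg : ∀ c v, 0 ≤ v → 0 ≤ B c v)
    (Ahead : ι → ℝ → Set P) (hAmono : ∀ c, Monotone (Ahead c))
    (v f δ' v' f' : ι → ℝ)
    -- vehicle contracts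
    (hveh : ∀ c, (0 ≤ v c ∧ B c (v c) ≤ f c) →
      0 ≤ v' c ∧ 0 ≤ δ' c ∧ δ' c + B c (v' c) ≤ f c)
    -- Runtime contract
    (hrt : ((∀ c, 0 ≤ δ' c ∧ δ' c ≤ f c) ∧
        (∀ c d, c ≠ d → Disjoint (Ahead c (f c - δ' c)) (Ahead d (f d - δ' d)))) →
      (∀ c, f c - δ' c ≤ f' c) ∧
        (∀ c d, c ≠ d → Disjoint (Ahead c (f' c)) (Ahead d (f' d))))
    -- invariant at the beginning of the cycle
    (hinv : (∀ c, 0 ≤ v c ∧ B c (v c) ≤ f c) ∧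
      (∀ c d, c ≠ d → Disjoint (Ahead c (f c)) (Ahead d (f d)))) :
    -- invariant at the beginning of the next cycle
    (∀ c, 0 ≤ v' c ∧ B c (v' c) ≤ f' c) ∧
      (∀ c d, c ≠ d → Disjoint (Ahead c (f' c)) (Ahead d (f' d))) := by
  obtain ⟨hinv1, hinv2⟩ := hinv
  have hveh' : ∀ c, 0 ≤ v' c ∧ 0 ≤ δ' c ∧ δ' c + B c (v' c) ≤ f c :=
    fun c => hveh c (hinv1 c)
  have hass : (∀ c, 0 ≤ δ' c ∧ δ' c ≤ f c) ∧
      (∀ c d, c ≠ d → Disjoint (Ahead c (f c - δ' c)) (Ahead d (f d - δ' d))) := by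
    constructor
    · intro c
      obtain ⟨hv', hδ', hsum⟩ := hveh' c
      refine ⟨hδ', ?_⟩
      have := hBnonneg c (v' c) hv'
      linarith
    · intro c d hcd
      have hc := (hveh' c).2.1
      have hd := (hveh' d).2.1
      exact (hinv2 c d hcd).mono (hAmono c (by linarith)) (hAmono d (by linarith))
  obtain ⟨hf', hdisj'⟩ := hrt hass
  refine ⟨fun c => ?_, hdisj'⟩
  obtain ⟨hv', hδ', hsum⟩ := hveh' c
  exact ⟨hv', by have := hf' c; linarith⟩
end
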